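/- Fix L ≥ 3, λ > 0, and real numbers h_1,…,h_L with h_l > 0 for all l, h_l < h_{l−1} for l = 2,…,L−1, and h_1 < 1 − (h_1 + ⋯ + h_L). Define T_1 = −(1/λ)·log(1 − h_1/(1 − (h_1 + ⋯ + h_L))), T_l = −(1/λ)·log(1 − h_l/h_{l−1}) for l = 2,…,L−1, and T_L = (1/λ)·log(1 + h_L/h_{L−1}). Then T_l > 0 for all l, and the MCD stationary probabilities computed from these timers recover h: with h_0' = 1/(1 + Σ_{l=1}^{L−1} ∏_{j=1}^{l}(1 − e^{−λ T_j}) + e^{λ T_L} ∏_{j=1}^{L}(1 − e^{−λ T_j})), one has h_0' = 1 − Σ_{l=1}^{L} h_l, h_0' ∏_{j=1}^{l}(1 − e^{−λ T_j}) = h_l for l = 1,…,L−1, and h_0' · e^{λ T_L} · ∏_{j=1}^{L}(1 − e^{−λ T_j}) = h_L. -/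

import Mathlib

/-- Inverse change of variables for MCD (equation (10) of the paper): given
`h_1, …, h_L > 0` with `h_l < h_{l-1}` for `l = 2, …, L-1` and
`h_1 < 1 - ∑_l h_l`, the timers
`T_1 = -(1/λ)log(1 - h_1/(1 - ∑_l h_l))`,
`T_l = -(1/λ)log(1 - h_l/h_{l-1})` for `l = 2, …, L-1`, and
`T_L = (1/λ)log(1 + h_L/h_{L-1})` are positive, and the MCD stationary
probabilities computed from them recover `h` (with normalizer
`h_0' = 1 - ∑_{l=1}^{L} h_l`). -/
theorem stmt_16 (L : ℕ) (hL : 3 ≤ L) (lam : ℝ) (hlam : 0 < lam)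
    (h : ℕ → ℝ) (hpos : ∀ l, 1 ≤ l → l ≤ L → 0 < h l)
    (hchain : ∀ l, 2 ≤ l → l ≤ L - 1 → h l < h (l - 1))
    (h1lt : h 1 < 1 - ∑ l ∈ Finset.Icc 1 L, h l)
    (T : ℕ → ℝ)
    (hT1 : T 1 = -(1 / lam) *
        Real.log (1 - h 1 / (1 - ∑ l ∈ Finset.Icc 1 L, h l)))
    (hTl : ∀ l, 2 ≤ l → l ≤ L - 1 →
        T l = -(1 / lam) * Real.log (1 - h l / h (l - 1)))
    (hTL : T L = (1 / lam) * Real.log (1 + h L / h (L - 1)))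
    (h0' : ℝ)
    (hh0' : h0' = 1 / (1 + (∑ l ∈ Finset.Icc 1 (L - 1), ∏ j ∈ Finset.Icc 1 l,
          (1 - Real.exp (-(lam * T j)))) +
        Real.exp (lam * T L) * ∏ j ∈ Finset.Icc 1 L,
          (1 - Real.exp (-(lam * T j))))) :
    (∀ l, 1 ≤ l → l ≤ L → 0 < T l) ∧
    (h0' = 1 - ∑ l ∈ Finset.Icc 1 L, h l) ∧
    (∀ l, 1 ≤ l → l ≤ L - 1 →
      h0' * ∏ j ∈ Finset.Icc 1 l, (1 - Real.exp (-(lam * T j))) = h l) ∧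
    (h0' * Real.exp (lam * T L) *
      ∏ j ∈ Finset.Icc 1 L, (1 - Real.exp (-(lam * T j))) = h L) := by
  have hlam' : lam ≠ 0 := ne_of_gt hlam
  set S : ℝ := ∑ l ∈ Finset.Icc 1 L, h l with hS
  set h0 : ℝ := 1 - S with hh0
  have h1pos : 0 < h 1 := hpos 1 le_rfl (by omega)
  have h0pos : 0 < h0 := lt_trans h1pos h1lt
  have hLm1pos : 0 < h (L - 1) := hpos (L - 1) (by omega) (by omega)
  -- x-values for each j
  have keyexp : ∀ j, 1 ≤ j → j ≤ L - 1 →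
      Real.exp (-(lam * T j)) = 1 - h j / (if j = 1 then h0 else h (j - 1)) := by
    intro j hj1 hjL
    by_cases hj : j = 1
    · subst hj
      have hx : (0:ℝ) < 1 - h 1 / h0 := by
        have : h 1 / h0 < 1 := (div_lt_one h0pos).mpr h1lt
        linarith
      simp only [if_pos]
      rw [hT1]
      have : lam * (-(1 / lam) * Real.log (1 - h 1 / h0)) =
          -Real.log (1 - h 1 / h0) := by field_simp
      rw [this, neg_neg, Real.exp_log hx]
    · have hj2 : 2 ≤ j := by omega
      have hjm : 0 < h (j - 1) := hpos (j - 1) (by omega) (by omega)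
      have hlt : h j < h (j - 1) := hchain j hj2 hjL
      have hx : (0:ℝ) < 1 - h j / h (j - 1) := by
        have : h j / h (j - 1) < 1 := (div_lt_one hjm).mpr hlt
        linarith
      simp only [if_neg hj]
      rw [hTl j hj2 hjL]
      have : lam * (-(1 / lam) * Real.log (1 - h j / h (j - 1))) =
          -Real.log (1 - h j / h (j - 1)) := by field_simp
      rw [this, neg_neg, Real.exp_log hx]
  have key : ∀ j, 1 ≤ j → j ≤ L - 1 →
      1 - Real.exp (-(lam * T j)) = h j / (if j = 1 then h0 else h (j - 1)) := by
    intro j hj1 hjL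
    rw [keyexp j hj1 hjL]; ring
  -- telescoping product
  have prodkey : ∀ l, 1 ≤ l → l ≤ L - 1 →
      ∏ j ∈ Finset.Icc 1 l, (1 - Real.exp (-(lam * T j))) = h l / h0 := by
    intro l
    induction l with
    | zero => omega
    | succ n ih =>
      intro _ hle
      by_cases hn : n = 0
      · subst hn
        rw [Finset.Icc_self, Finset.prod_singleton, key 1 le_rfl (by omega)]
        simp
      · have hn1 : 1 ≤ n := by omega
        rw [Finset.prod_Icc_succ_top (by omega), ih hn1 (by omega),
          key (n + 1) (by omega) hle]
        have hif : (n + 1 ≠ 1) := by omega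
        simp only [if_neg hif, Nat.add_sub_cancel]
        have hnpos : 0 < h n := hpos n hn1 (by omega)
        field_simp
  -- the last factor
  have rpos : 0 < h L / h (L - 1) := div_pos (hpos L (by omega) le_rfl) hLm1pos
  have expL : Real.exp (lam * T L) = 1 + h L / h (L - 1) := by
    rw [hTL]
    have : lam * (1 / lam * Real.log (1 + h L / h (L - 1))) =
        Real.log (1 + h L / h (L - 1)) := by field_simp
    rw [this, Real.exp_log (by linarith)]
  have h1r : (0:ℝ) < 1 + h L / h (L - 1) := by linarith
  have hLpos : 0 < h L := hpos L (by omega) le_rfl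
  have hsumne : h (L - 1) + h L ≠ 0 := by positivity
  have hLm1ne : h (L - 1) ≠ 0 := ne_of_gt hLm1pos
  have h0ne : h0 ≠ 0 := ne_of_gt h0pos
  have h1rne : (1 + h L / h (L - 1)) ≠ 0 := by positivity
  have lastfac : 1 - Real.exp (-(lam * T L)) =
      (h L / h (L - 1)) / (1 + h L / h (L - 1)) := by
    rw [Real.exp_neg, expL]
    field_simp
    ring
  have hLsplit : L - 1 + 1 = L := by omega
  have prodL : ∏ j ∈ Finset.Icc 1 L, (1 - Real.exp (-(lam * T j))) =
      (h (L - 1) / h0) * ((h L / h (L - 1)) / (1 + h L / h (L - 1))) := by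
    rw [← hLsplit, Finset.prod_Icc_succ_top (by omega),
      prodkey (L - 1) (by omega) le_rfl, hLsplit, lastfac]
  have fullL : Real.exp (lam * T L) *
      ∏ j ∈ Finset.Icc 1 L, (1 - Real.exp (-(lam * T j))) = h L / h0 := by
    rw [prodL, expL]
    field_simp
  -- normalizer
  have sumkey : ∑ l ∈ Finset.Icc 1 (L - 1), ∏ j ∈ Finset.Icc 1 l,
      (1 - Real.exp (-(lam * T j))) = (∑ l ∈ Finset.Icc 1 (L - 1), h l) / h0 := by
    rw [Finset.sum_div]
    exact Finset.sum_congr rfl fun l hl => by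
      obtain ⟨hl1, hl2⟩ := Finset.mem_Icc.mp hl
      exact prodkey l hl1 hl2
  have hSsplit : S = (∑ l ∈ Finset.Icc 1 (L - 1), h l) + h L := by
    rw [hS, ← hLsplit, Finset.sum_Icc_succ_top (by omega), hLsplit]
  have hh0eq : h0' = h0 := by
    have denom : 1 + (∑ l ∈ Finset.Icc 1 (L - 1), h l) / h0 + h L / h0
        = 1 / h0 := by
      field_simp
      linarith [hSsplit]
    rw [hh0', sumkey, fullL, denom, one_div_one_div]
  -- positivity of timers
  have Tpos : ∀ l, 1 ≤ l → l ≤ L → 0 < T l := by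
    intro l hl1 hlL
    by_cases hlast : l = L
    · rw [hlast, hTL]
      have hlog : 0 < Real.log (1 + h L / h (L - 1)) :=
        Real.log_pos (by linarith)
      exact mul_pos (by positivity) hlog
    · have hle : l ≤ L - 1 := by omega
      have he := keyexp l hl1 hle
      have hxlt : Real.exp (-(lam * T l)) < 1 := by
        rw [he]
        have hprev : 0 < (if l = 1 then h0 else h (l - 1)) := by
          by_cases hl : l = 1
          · simp [hl, h0pos]
          · simp only [if_neg hl]; exact hpos (l - 1) (by omega) (by omega)
        have : 0 < h l / (if l = 1 then h0 else h (l - 1)) :=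
          div_pos (hpos l hl1 (by omega)) hprev
        linarith
      have hmul : 0 < lam * T l := by
        by_contra hc
        push_neg at hc
        have : (1:ℝ) ≤ Real.exp (-(lam * T l)) :=
          Real.one_le_exp (by linarith)
        linarith
      nlinarith
  refine ⟨Tpos, hh0eq, ?_, ?_⟩
  · intro l hl1 hl2
    rw [hh0eq, prodkey l hl1 hl2]
    field_simp
  · rw [hh0eq, mul_assoc, fullL]
    field_simp
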